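/- Define f_1(z) = (371 - 524 cos z + 172 cos 2z - 20 cos 3z + cos 4z - 72z²(1 - cos z))/(18z⁴) + μ²(101 - 16 cos z - 100 cos 2z + 16 cos 3z - cos 4z - 144 z sin z)/(72 z²), where μ is a real parameter. Then for every μ there exists z₀ > 0 with z₀ < π such that f_1(z) > 0 for all z with 0 < |z| ≤ z₀. In particular one may take z₀ = sqrt(6(98μ² + 91 - sqrt(10661 - 4004μ² + 9604μ⁴))/(156μ² - 17)) when 156μ² ≠ 17, and z₀ = 6·sqrt(130/1133) when 156μ² = 17. -/

import Mathlib

set_option maxHeartbeats 1000000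

/-- The function `f_1(z)` in its trigonometric form, with parameter `μ`. -/
noncomputable def fOne (mu z : ℝ) : ℝ :=
  (371 - 524 * Real.cos z + 172 * Real.cos (2*z) - 20 * Real.cos (3*z)
      + Real.cos (4*z) - 72 * z^2 * (1 - Real.cos z)) / (18 * z^4)
  + mu^2 * (101 - 16 * Real.cos z - 100 * Real.cos (2*z) + 16 * Real.cos (3*z)
      - Real.cos (4*z) - 144 * z * Real.sin z) / (72 * z^2)

/-- The explicit radius `z₀` of Lemma 1. -/
noncomputable def zZero (mu : ℝ) : ℝ :=
  if 156 * mu^2 = 17 then 6 * Real.sqrt (130/1133)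
  else Real.sqrt (6 * (98*mu^2 + 91
    - Real.sqrt (10661 - 4004*mu^2 + 9604*mu^4)) / (156*mu^2 - 17))

section Taylor


lemma aux_nonneg (f f' : ℝ → ℝ) (hd : ∀ x, HasDerivAt f (f' x) x)
    (h0 : f 0 = 0) (hpos : ∀ x, 0 ≤ x → 0 ≤ f' x) :
    ∀ x, 0 ≤ x → 0 ≤ f x := by
  intro x hx
  have hmono : MonotoneOn f (Set.Ici 0) := by
    apply monotoneOn_of_deriv_nonneg (convex_Ici 0)
    · exact fun y _ => (hd y).continuousAt.continuousWithinAt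
    · exact fun y _ => ((hd y).differentiableAt).differentiableWithinAt
    · intro y hy
      rw [interior_Ici] at hy
      rw [(hd y).deriv]
      exact hpos y (le_of_lt hy)
  have := hmono (Set.self_mem_Ici) (Set.mem_Ici.2 hx) hx
  linarith [this]

lemma poly_hasDerivAt (a1 a3 a5 a7 a9 : ℝ) (y : ℝ) :
    HasDerivAt (fun y : ℝ => a1*y + a3*y^3 + a5*y^5 + a7*y^7 + a9*y^9)
      (a1 + 3*a3*y^2 + 5*a5*y^4 + 7*a7*y^6 + 9*a9*y^8) y := by
  have h := (((((hasDerivAt_id y).const_mul a1).add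
      (((hasDerivAt_pow 3 y)).const_mul a3)).add
      (((hasDerivAt_pow 5 y)).const_mul a5)).add
      (((hasDerivAt_pow 7 y)).const_mul a7)).add
      (((hasDerivAt_pow 9 y)).const_mul a9)
  exact h.congr_deriv (by push_cast; ring)

lemma poly_even_hasDerivAt (a0 a2 a4 a6 a8 : ℝ) (y : ℝ) :
    HasDerivAt (fun y : ℝ => a0 + a2*y^2 + a4*y^4 + a6*y^6 + a8*y^8)
      (2*a2*y + 4*a4*y^3 + 6*a6*y^5 + 8*a8*y^7) y := by
  have h := ((((hasDerivAt_const y a0).add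
      (((hasDerivAt_pow 2 y)).const_mul a2)).add
      (((hasDerivAt_pow 4 y)).const_mul a4)).add
      (((hasDerivAt_pow 6 y)).const_mul a6)).add
      (((hasDerivAt_pow 8 y)).const_mul a8)
  exact h.congr_deriv (by push_cast; ring)

lemma taylor_s2 (x : ℝ) (hx : 0 ≤ x) : x - x^3/6 ≤ Real.sin x := by
  have := aux_nonneg (fun y => Real.sin y - (1*y + (-1/6)*y^3 + 0*y^5 + 0*y^7 + 0*y^9))
      (fun y => Real.cos y - (1 + 3*(-1/6)*y^2 + 5*0*y^4 + 7*0*y^6 + 9*0*y^8))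
      (fun y => (Real.hasDerivAt_sin y).sub (poly_hasDerivAt 1 (-1/6) 0 0 0 y))
      (by norm_num)
      (fun y _ => by
        have := Real.one_sub_sq_div_two_le_cos (x := y); nlinarith)
      x hx
  nlinarith [this]

lemma taylor_c2 (x : ℝ) (hx : 0 ≤ x) : Real.cos x ≤ 1 - x^2/2 + x^4/24 := by
  have := aux_nonneg
      (fun y => (1 + (-1/2)*y^2 + (1/24)*y^4 + 0*y^6 + 0*y^8) - Real.cos y)
      (fun y => (2*(-1/2)*y + 4*(1/24)*y^3 + 6*0*y^5 + 8*0*y^7) - (-Real.sin y))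
      (fun y => (poly_even_hasDerivAt 1 (-1/2) (1/24) 0 0 y).sub (Real.hasDerivAt_cos y))
      (by norm_num)
      (fun y hy => by have := taylor_s2 y hy; nlinarith)
      x hx
  nlinarith [this]

lemma taylor_s3 (x : ℝ) (hx : 0 ≤ x) : Real.sin x ≤ x - x^3/6 + x^5/120 := by
  have := aux_nonneg
      (fun y => (1*y + (-1/6)*y^3 + (1/120)*y^5 + 0*y^7 + 0*y^9) - Real.sin y)
      (fun y => (1 + 3*(-1/6)*y^2 + 5*(1/120)*y^4 + 7*0*y^6 + 9*0*y^8) - Real.cos y)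
      (fun y => (poly_hasDerivAt 1 (-1/6) (1/120) 0 0 y).sub (Real.hasDerivAt_sin y))
      (by norm_num)
      (fun y hy => by have := taylor_c2 y hy; nlinarith)
      x hx
  nlinarith [this]

lemma taylor_c3 (x : ℝ) (hx : 0 ≤ x) : 1 - x^2/2 + x^4/24 - x^6/720 ≤ Real.cos x := by
  have := aux_nonneg
      (fun y => Real.cos y - (1 + (-1/2)*y^2 + (1/24)*y^4 + (-1/720)*y^6 + 0*y^8))
      (fun y => -Real.sin y - (2*(-1/2)*y + 4*(1/24)*y^3 + 6*(-1/720)*y^5 + 8*0*y^7))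
      (fun y => (Real.hasDerivAt_cos y).sub (poly_even_hasDerivAt 1 (-1/2) (1/24) (-1/720) 0 y))
      (by norm_num)
      (fun y hy => by have := taylor_s3 y hy; nlinarith)
      x hx
  nlinarith [this]

lemma taylor_s4 (x : ℝ) (hx : 0 ≤ x) : x - x^3/6 + x^5/120 - x^7/5040 ≤ Real.sin x := by
  have := aux_nonneg
      (fun y => Real.sin y - (1*y + (-1/6)*y^3 + (1/120)*y^5 + (-1/5040)*y^7 + 0*y^9))
      (fun y => Real.cos y - (1 + 3*(-1/6)*y^2 + 5*(1/120)*y^4 + 7*(-1/5040)*y^6 + 9*0*y^8))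
      (fun y => (Real.hasDerivAt_sin y).sub (poly_hasDerivAt 1 (-1/6) (1/120) (-1/5040) 0 y))
      (by norm_num)
      (fun y hy => by have := taylor_c3 y hy; nlinarith)
      x hx
  nlinarith [this]

lemma taylor_c4 (x : ℝ) (hx : 0 ≤ x) :
    Real.cos x ≤ 1 - x^2/2 + x^4/24 - x^6/720 + x^8/40320 := by
  have := aux_nonneg
      (fun y => (1 + (-1/2)*y^2 + (1/24)*y^4 + (-1/720)*y^6 + (1/40320)*y^8) - Real.cos y)
      (fun y => (2*(-1/2)*y + 4*(1/24)*y^3 + 6*(-1/720)*y^5 + 8*(1/40320)*y^7) - (-Real.sin y))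
      (fun y => (poly_even_hasDerivAt 1 (-1/2) (1/24) (-1/720) (1/40320) y).sub
        (Real.hasDerivAt_cos y))
      (by norm_num)
      (fun y hy => by have := taylor_s4 y hy; nlinarith)
      x hx
  nlinarith [this]

lemma taylor_s5 (x : ℝ) (hx : 0 ≤ x) :
    Real.sin x ≤ x - x^3/6 + x^5/120 - x^7/5040 + x^9/362880 := by
  have := aux_nonneg
      (fun y => (1*y + (-1/6)*y^3 + (1/120)*y^5 + (-1/5040)*y^7 + (1/362880)*y^9) - Real.sin y)
      (fun y => (1 + 3*(-1/6)*y^2 + 5*(1/120)*y^4 + 7*(-1/5040)*y^6 + 9*(1/362880)*y^8)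
        - Real.cos y)
      (fun y => (poly_hasDerivAt 1 (-1/6) (1/120) (-1/5040) (1/362880) y).sub
        (Real.hasDerivAt_sin y))
      (by norm_num)
      (fun y hy => by have := taylor_c4 y hy; nlinarith)
      x hx
  nlinarith [this]

end Taylor

/- Taylor bounds with primed names used below. -/
lemma taylor_c3' (x : ℝ) (hx : 0 ≤ x) : 1 - x^2/2 + x^4/24 - x^6/720 ≤ Real.cos x :=
  taylor_c3 x hx
lemma taylor_c4' (x : ℝ) (hx : 0 ≤ x) :
    Real.cos x ≤ 1 - x^2/2 + x^4/24 - x^6/720 + x^8/40320 := taylor_c4 x hx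
lemma taylor_s5' (x : ℝ) (hx : 0 ≤ x) :
    Real.sin x ≤ x - x^3/6 + x^5/120 - x^7/5040 + x^9/362880 := taylor_s5 x hx


lemma pow_chain (t : ℝ) (h0 : 0 ≤ t) (h13 : t ≤ 13/3) (k : ℕ) :
    t^(k+1) ≤ (13/3) * t^k := by
  calc t^(k+1) = t * t^k := by ring
  _ ≤ (13/3) * t^k := mul_le_mul_of_nonneg_right h13 (pow_nonneg h0 k)

lemma polyEta (t : ℝ) (h0 : 0 ≤ t) (h13 : t ≤ 13/3) :
    0 < 3/4 - 1/10*t - 29/2240*t^2 + 113/40320*t^3 - 97/403200*t^4 + 31/2419200*t^5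
      - 191/406425600*t^6 + 1787/146313216000*t^7 - 43/195084288000*t^8
      + 1/390168576000*t^9 - 1/65548320768000*t^10 := by
  have c1 := pow_chain t h0 h13 1
  have c2 := pow_chain t h0 h13 2
  have c3 := pow_chain t h0 h13 3
  have c4 := pow_chain t h0 h13 4
  have c5 := pow_chain t h0 h13 5
  have c6 := pow_chain t h0 h13 6
  have c7 := pow_chain t h0 h13 7
  have c8 := pow_chain t h0 h13 8
  have c9 := pow_chain t h0 h13 9
  have n2 := pow_nonneg h0 2
  have n3 := pow_nonneg h0 3
  have n4 := pow_nonneg h0 4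
  have n5 := pow_nonneg h0 5
  have n6 := pow_nonneg h0 6
  have n7 := pow_nonneg h0 7
  have n8 := pow_nonneg h0 8
  have n9 := pow_nonneg h0 9
  have n10 := pow_nonneg h0 10
  nlinarith [sq_nonneg (t - 13/3)]

lemma polyR (t : ℝ) (h0 : 0 ≤ t) (h13 : t ≤ 13/3) :
    0 < 139/4 - 13039/1200*t + 17051/11200*t^2 - 12931/120960*t^3 + 1259101/508032000*t^4
      + 258757/1219276800*t^5 - 529/22861440*t^6 + 2418781/2194698240000*t^7
      - 320771/10241925120000*t^8 + 103267/184354652160000*t^9 - 79/12290310144000*t^10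
      + 43/786579849216000*t^11 - 13/55060589445120000*t^12 := by
  have c1 := pow_chain t h0 h13 1
  have c2 := pow_chain t h0 h13 2
  have c3 := pow_chain t h0 h13 3
  have c4 := pow_chain t h0 h13 4
  have c5 := pow_chain t h0 h13 5
  have c6 := pow_chain t h0 h13 6
  have c7 := pow_chain t h0 h13 7
  have c8 := pow_chain t h0 h13 8
  have c9 := pow_chain t h0 h13 9
  have c10 := pow_chain t h0 h13 10
  have c11 := pow_chain t h0 h13 11
  have n2 := pow_nonneg h0 2
  have n3 := pow_nonneg h0 3
  have n4 := pow_nonneg h0 4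
  have n5 := pow_nonneg h0 5
  have n6 := pow_nonneg h0 6
  have n7 := pow_nonneg h0 7
  have n8 := pow_nonneg h0 8
  have n9 := pow_nonneg h0 9
  have n10 := pow_nonneg h0 10
  have n11 := pow_nonneg h0 11
  have n12 := pow_nonneg h0 12
  nlinarith [sq_nonneg (t - 13/3)]

lemma polyEta' (t : ℝ) (h0 : 0 ≤ t) (h13 : t ≤ 13/3) :
    0 < 3/4 - 1/10*t - 29/2240*t^2 + 113/40320*t^3 - 97/403200*t^4 + 31/2419200*t^5
      - 191/406425600*t^6 + 1787/146313216000*t^7 - 43/195084288000*t^8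
      + 1/390168576000*t^9 - 1/65548320768000*t^10 := polyEta t h0 h13

lemma polyR' (t : ℝ) (h0 : 0 ≤ t) (h13 : t ≤ 13/3) :
    0 < 139/4 - 13039/1200*t + 17051/11200*t^2 - 12931/120960*t^3 + 1259101/508032000*t^4
      + 258757/1219276800*t^5 - 529/22861440*t^6 + 2418781/2194698240000*t^7
      - 320771/10241925120000*t^8 + 103267/184354652160000*t^9 - 79/12290310144000*t^10
      + 43/786579849216000*t^11 - 13/55060589445120000*t^12 := polyR t h0 h13



lemma zZero_spec (mu : ℝ) :
    0 < zZero mu ∧ (zZero mu)^2 < 13/3 ∧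
      ∀ t : ℝ, 0 ≤ t → t ≤ (zZero mu)^2 →
        0 ≤ 5040 - 12*(98*mu^2+91)*t + (156*mu^2-17)*t^2 := by
  set m := mu^2 with hm
  have hm0 : 0 ≤ m := sq_nonneg mu
  by_cases hcase : 156 * m = 17
  · rw [zZero, if_pos hcase]
    have hsq : (6 * Real.sqrt (130/1133))^2 = 4680/1133 := by
      rw [mul_pow, Real.sq_sqrt (by norm_num : (0:ℝ) ≤ 130/1133)]
      norm_num
    refine ⟨by positivity, by rw [hsq]; norm_num, ?_⟩
    intro t ht0 htle
    rw [hsq] at htle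
    have hmval : m = 17/156 := by linarith
    rw [hmval]
    nlinarith
  · rw [zZero, if_neg hcase]
    have ha : 156 * m - 17 ≠ 0 := fun h => hcase (by linarith)
    have hD0 : (0:ℝ) < 10661 - 4004*m + 9604*m^2 := by nlinarith
    have hDm : 10661 - 4004*mu^2 + 9604*mu^4 = 10661 - 4004*m + 9604*m^2 := by
      rw [hm]; ring
    rw [hDm]
    set s := Real.sqrt (10661 - 4004*m + 9604*m^2) with hs
    have hs0 : 0 ≤ s := Real.sqrt_nonneg _
    have hs2 : s^2 = 10661 - 4004*m + 9604*m^2 := Real.sq_sqrt hD0.le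
    set arg := 6 * (98*m + 91 - s) / (156*m - 17) with harg
    have hargpos : 0 < arg := by
      rcases lt_or_gt_of_ne ha with hneg | hpos
      · have h1 : 98*m + 91 < s := by nlinarith
        exact div_pos_of_neg_of_neg (by linarith) (by linarith)
      · have h1 : s < 98*m + 91 := by nlinarith
        exact div_pos (by linarith) (by linarith)
    have hzsq : Real.sqrt arg ^ 2 = arg := Real.sq_sqrt hargpos.le
    have haarg : (156*m - 17) * arg = 6 * (98*m + 91 - s) := by
      rw [harg]; field_simp
    have hQarg : 5040 - 12*(98*m+91)*arg + (156*m-17)*arg^2 = 0 := by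
      have h2 : (156*m-17)^2 * (5040 - 12*(98*m+91)*arg + (156*m-17)*arg^2)
          = 5040*(156*m-17)^2 - 12*(98*m+91)*(156*m-17)*(6*(98*m+91-s))
            + (156*m-17)*(6*(98*m+91-s))^2 := by
        have e1 : (156*m-17)^2 * arg^2 = (6*(98*m+91-s))^2 := by
          rw [← haarg]; ring
        linear_combination (5040 - 12*(98*m+91)*arg) * (mul_comm (156*m-17) arg ▸ rfl : (156*m-17)*arg = (156*m-17)*arg) + (156*m-17) * e1 + (-12*(98*m+91)*(156*m-17)) * haarg
      have h3 : 5040*(156*m-17)^2 - 12*(98*m+91)*(156*m-17)*(6*(98*m+91-s))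
            + (156*m-17)*(6*(98*m+91-s))^2 = 0 := by
        linear_combination (36*(156*m-17)) * hs2
      have h4 := h2.trans h3
      have h5 : (156*m-17)^2 ≠ 0 := pow_ne_zero 2 ha
      exact (mul_eq_zero.mp h4).resolve_left h5
    have hQmono : ∀ t : ℝ, 0 ≤ t → t ≤ arg →
        0 ≤ 5040 - 12*(98*m+91)*t + (156*m-17)*t^2 := by
      intro t ht0 htle
      have hfac : 5040 - 12*(98*m+91)*t + (156*m-17)*t^2
          = (t - arg) * ((156*m-17)*t - 6*(98*m+91) - 6*s) := by
        linear_combination hQarg + (t - arg) * haarg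
      rw [hfac]
      have hB : (156*m-17)*t - 6*(98*m+91) - 6*s ≤ 0 := by
        rcases lt_or_gt_of_ne ha with hneg | hpos
        · nlinarith
        · have : (156*m-17)*t ≤ (156*m-17)*arg :=
            mul_le_mul_of_nonneg_left htle (by linarith)
          rw [haarg] at this
          linarith
      nlinarith [mul_nonneg (sub_nonneg.2 htle) (neg_nonneg.2 hB)]
    have harg13 : arg < 13/3 := by
      by_contra hcon
      push_neg at hcon
      have h := hQmono (13/3) (by norm_num) hcon
      nlinarith
    rw [hzsq]
    exact ⟨Real.sqrt_pos.2 hargpos, harg13, hQmono⟩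

lemma polyL1pos (t : ℝ) (h0 : 0 < t) (h13 : t ≤ 13/3) :
    0 < t/2 - t^2/24 + t^3/720 - t^4/40320 := by
  nlinarith [pow_nonneg h0.le 2, pow_nonneg h0.le 3, pow_nonneg h0.le 4,
    mul_le_mul_of_nonneg_right h13 (pow_nonneg h0.le 1),
    mul_le_mul_of_nonneg_right h13 (pow_nonneg h0.le 2),
    mul_le_mul_of_nonneg_right h13 (pow_nonneg h0.le 3)]

lemma polyHpos (t : ℝ) (h0 : 0 < t) (h13 : t ≤ 13/3) :
    0 < (t/2 - t^2/24 + t^3/720 - t^4/40320)^3 + 6*(t/2 - t^2/24 + t^3/720 - t^4/40320)^2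
      + 18*(t/2 - t^2/24 + t^3/720 - t^4/40320) - 9*t := by
  have he : (t/2 - t^2/24 + t^3/720 - t^4/40320)^3 + 6*(t/2 - t^2/24 + t^3/720 - t^4/40320)^2
      + 18*(t/2 - t^2/24 + t^3/720 - t^4/40320) - 9*t
      = t^2 * (3/4 - 1/10*t - 29/2240*t^2 + 113/40320*t^3 - 97/403200*t^4 + 31/2419200*t^5
      - 191/406425600*t^6 + 1787/146313216000*t^7 - 43/195084288000*t^8
      + 1/390168576000*t^9 - 1/65548320768000*t^10) := by ring
  rw [he]
  exact mul_pos (pow_pos h0 2) (polyEta' t h0.le h13)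

lemma polyKey (t : ℝ) (h0 : 0 < t) (h13 : t ≤ 13/3) :
    0 < 48*t*(98-13*t) * ((t/2 - t^2/24 + t^3/720 - t^4/40320) *
        ((t/2 - t^2/24 + t^3/720 - t^4/40320)^3 + 6*(t/2 - t^2/24 + t^3/720 - t^4/40320)^2
          + 18*(t/2 - t^2/24 + t^3/720 - t^4/40320) - 9*t))
      + t * ((5040 - 1092*t - 17*t^2) *
        (36*(t/2 - t^2/24 + t^3/720 - t^4/40320) - 6*(t/2 - t^2/24 + t^3/720)^2
          - 4*(t/2 - t^2/24 + t^3/720)^3 - (t/2 - t^2/24 + t^3/720)^4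
          - 18*(t - t^2/6 + t^3/120 - t^4/5040 + t^5/362880))) := by
  have he : 48*t*(98-13*t) * ((t/2 - t^2/24 + t^3/720 - t^4/40320) *
        ((t/2 - t^2/24 + t^3/720 - t^4/40320)^3 + 6*(t/2 - t^2/24 + t^3/720 - t^4/40320)^2
          + 18*(t/2 - t^2/24 + t^3/720 - t^4/40320) - 9*t))
      + t * ((5040 - 1092*t - 17*t^2) *
        (36*(t/2 - t^2/24 + t^3/720 - t^4/40320) - 6*(t/2 - t^2/24 + t^3/720)^2
          - 4*(t/2 - t^2/24 + t^3/720)^3 - (t/2 - t^2/24 + t^3/720)^4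
          - 18*(t - t^2/6 + t^3/120 - t^4/5040 + t^5/362880)))
      = t^6 * (139/4 - 13039/1200*t + 17051/11200*t^2 - 12931/120960*t^3
        + 1259101/508032000*t^4 + 258757/1219276800*t^5 - 529/22861440*t^6
        + 2418781/2194698240000*t^7 - 320771/10241925120000*t^8
        + 103267/184354652160000*t^9 - 79/12290310144000*t^10
        + 43/786579849216000*t^11 - 13/55060589445120000*t^12) := by ring
  rw [he]
  exact mul_pos (pow_pos h0 6) (polyR' t h0.le h13)

lemma fOne_pos_aux (mu w : ℝ) (hw : 0 < w) (h13w : w^2 ≤ 13/3)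
    (hQw : 0 ≤ 5040 - 12*(98*mu^2+91)*w^2 + (156*mu^2-17)*(w^2)^2) :
    0 < fOne mu w := by
  obtain ⟨t, htdef⟩ : ∃ x : ℝ, x = w^2 := ⟨_, rfl⟩
  have ht : 0 < t := by rw [htdef]; positivity
  have h13 : t ≤ 13/3 := by rw [htdef]; exact h13w
  have hQ : 0 ≤ 5040 - 12*(98*mu^2+91)*t + (156*mu^2-17)*t^2 := by
    rw [htdef]; exact hQw
  obtain ⟨u, hudef⟩ : ∃ x : ℝ, x = 1 - Real.cos w := ⟨_, rfl⟩
  have hc3 := taylor_c3' w hw.le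
  have hc4 := taylor_c4' w hw.le
  have hs5 := taylor_s5' w hw.le
  obtain ⟨L, hLdef⟩ : ∃ x : ℝ, x = t/2 - t^2/24 + t^3/720 - t^4/40320 := ⟨_, rfl⟩
  obtain ⟨U, hUdef⟩ : ∃ x : ℝ, x = t/2 - t^2/24 + t^3/720 := ⟨_, rfl⟩
  obtain ⟨S, hSdef⟩ : ∃ x : ℝ, x = t - t^2/6 + t^3/120 - t^4/5040 + t^5/362880 := ⟨_, rfl⟩
  have hLu : L ≤ u := by rw [hLdef, hudef, htdef]; nlinarith [hc4]
  have huU : u ≤ U := by rw [hUdef, hudef, htdef]; nlinarith [hc3]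
  have hu0 : 0 ≤ u := by rw [hudef]; linarith [Real.cos_le_one w]
  have hSin : w * Real.sin w ≤ S := by
    have h1 := mul_le_mul_of_nonneg_left hs5 hw.le
    rw [hSdef, htdef]
    nlinarith [h1]
  have hLpos : 0 < L := by rw [hLdef]; exact polyL1pos t ht h13
  have hL0 : 0 ≤ L := hLpos.le
  have hupos : 0 < u := lt_of_lt_of_le hLpos hLu
  obtain ⟨hh, hhdef⟩ : ∃ x : ℝ, x = u^3 + 6*u^2 + 18*u - 9*t := ⟨_, rfl⟩
  have hHpos : 0 < L^3 + 6*L^2 + 18*L - 9*t := by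
    rw [hLdef]; exact polyHpos t ht h13
  have hHh : L^3 + 6*L^2 + 18*L - 9*t ≤ hh := by
    have h3 : L^3 ≤ u^3 := pow_le_pow_left₀ hL0 hLu 3
    have h2 : L^2 ≤ u^2 := pow_le_pow_left₀ hL0 hLu 2
    rw [hhdef]; linarith
  have hhpos : 0 < hh := lt_of_lt_of_le hHpos hHh
  obtain ⟨W, hWdef⟩ : ∃ x : ℝ, x = 36*u - 6*u^2 - 4*u^3 - u^4 - 18*(w*Real.sin w) := ⟨_, rfl⟩
  obtain ⟨Wl, hWldef⟩ : ∃ x : ℝ, x = 36*L - 6*U^2 - 4*U^3 - U^4 - 18*S := ⟨_, rfl⟩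
  have hWl : Wl ≤ W := by
    have h2 : u^2 ≤ U^2 := pow_le_pow_left₀ hu0 huU 2
    have h3 : u^3 ≤ U^3 := pow_le_pow_left₀ hu0 huU 3
    have h4 : u^4 ≤ U^4 := pow_le_pow_left₀ hu0 huU 4
    rw [hWdef, hWldef]; linarith
  -- the identity
  have hwne : w ≠ 0 := ne_of_gt hw
  have hid : fOne mu w = 4*u*hh/(9*t^2) + mu^2*W/(9*t) := by
    rw [fOne, hhdef, hWdef, hudef, htdef]
    have e2 : Real.cos (2*w) = 2*(Real.cos w)^2 - 1 := Real.cos_two_mul w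
    have e3 : Real.cos (3*w) = 4*(Real.cos w)^3 - 3*Real.cos w := Real.cos_three_mul w
    have e4 : Real.cos (4*w) = 2*(Real.cos (2*w))^2 - 1 := by
      have := Real.cos_two_mul (2*w)
      rw [show 2*(2*w) = 4*w by ring] at this
      exact this
    rw [e4, e3, e2]
    field_simp
    ring
  have hcoef : (0:ℝ) < 98 - 13*t := by linarith
  rcases le_or_gt 0 W with hW0 | hWneg
  · rw [hid]
    have h1 : 0 < 4*u*hh/(9*t^2) := by positivity
    have h2 : 0 ≤ mu^2*W/(9*t) := by positivity
    linarith
  · have hmW : mu^2 * (12*t*(98-13*t)) ≤ 5040 - 1092*t - 17*t^2 := by nlinarith [hQ]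
    have hP0 : 0 ≤ 5040 - 1092*t - 17*t^2 := by
      have h1 : 0 ≤ mu^2 * (12*t*(98-13*t)) := by positivity
      linarith
    have hKey : 0 < 48*t*(98-13*t) * (L * (L^3 + 6*L^2 + 18*L - 9*t))
        + t * ((5040 - 1092*t - 17*t^2) * Wl) := by
      rw [hWldef, hLdef, hUdef, hSdef]
      exact polyKey t ht h13
    have hstep1 : 48*t*(98-13*t) * (L * (L^3 + 6*L^2 + 18*L - 9*t))
        + t * ((5040 - 1092*t - 17*t^2) * Wl)
        ≤ 48*t*(98-13*t) * (u*hh) + t * ((5040 - 1092*t - 17*t^2) * W) := by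
      have hm1 : L * (L^3 + 6*L^2 + 18*L - 9*t) ≤ u * hh :=
        mul_le_mul hLu hHh hHpos.le hu0
      have hm2 : (5040 - 1092*t - 17*t^2) * Wl ≤ (5040 - 1092*t - 17*t^2) * W :=
        mul_le_mul_of_nonneg_left hWl hP0
      have hc1 : (0:ℝ) ≤ 48*t*(98-13*t) := by positivity
      have := mul_le_mul_of_nonneg_left hm1 hc1
      have := mul_le_mul_of_nonneg_left hm2 ht.le
      linarith
    have hstep2 : t * ((5040 - 1092*t - 17*t^2) * W) ≤ t * ((mu^2 * (12*t*(98-13*t))) * W) := by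
      have h := mul_le_mul_of_nonpos_right hmW hWneg.le
      exact mul_le_mul_of_nonneg_left h ht.le
    have hKf : (108*t^3*(98-13*t)) * fOne mu w
        = 48*t*(98-13*t) * (u*hh) + t * ((mu^2 * (12*t*(98-13*t))) * W) := by
      rw [hid, htdef]
      field_simp
      ring
    have hKpos : 0 < 108*t^3*(98-13*t) := by positivity
    have hfinal : 0 < (108*t^3*(98-13*t)) * fOne mu w := by
      rw [hKf]; linarith
    nlinarith [hfinal, hKpos]

lemma fOne_neg (mu z : ℝ) : fOne mu (-z) = fOne mu z := by
  rw [fOne, fOne,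
    show (2:ℝ)*(-z) = -(2*z) by ring, show (3:ℝ)*(-z) = -(3*z) by ring,
    show (4:ℝ)*(-z) = -(4*z) by ring, Real.cos_neg, Real.cos_neg, Real.cos_neg,
    Real.cos_neg, Real.sin_neg]
  ring

theorem stmt_5 (mu : ℝ) :
    0 < zZero mu ∧ zZero mu < Real.pi ∧
      ∀ z : ℝ, 0 < |z| → |z| ≤ zZero mu → 0 < fOne mu z := by
  obtain ⟨hpos, hlt, hQall⟩ := zZero_spec mu
  refine ⟨hpos, ?_, ?_⟩
  · nlinarith [Real.pi_gt_three, hpos, hlt]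
  · intro z hz hzle
    have htle : |z|^2 ≤ (zZero mu)^2 := pow_le_pow_left₀ (abs_nonneg z) hzle 2
    have ht13 : |z|^2 ≤ 13/3 := le_of_lt (lt_of_le_of_lt htle hlt)
    have hQ := hQall (|z|^2) (by positivity) htle
    have hposabs : 0 < fOne mu |z| := by
      apply fOne_pos_aux mu |z| hz ht13
      have : ((|z|^2)^2 : ℝ) = (|z|^2)^2 := rfl
      nlinarith [hQ]
    rcases abs_choice z with h | h
    · rwa [h] at hposabs
    · rw [h, fOne_neg] at hposabs
      exact hposabs
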